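/- Let q be a power of 2 with q > 2, m = 2, n = q^2 + 1, and let a be one of the four largest q-cyclotomic coset leaders modulo n, namely (q^2 − q)/2, (q^2 − 3q + 2)/2, (q^2 − 3q)/2, or (q^2 − 3q − 2)/2. Then the q-cyclotomic coset C_a modulo n has exactly 4 elements. -/
import Mathlib

theorem step_mod (n q x w r k : ℕ) (hx : x % n = w) (h : w * q = r + k * n)
    (hr : r < n) : (x * q) % n = r := by
  rw [← Nat.mod_mul_mod, hx, h, Nat.add_mul_mod_self_right, Nat.mod_eq_of_lt hr]

theorem coset_four (n q a b0 b1 b2 b3 : ℕ) (hn2 : 2 ≤ n)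
    (h4 : q ^ 4 % n = 1)
    (h0 : a % n = b0) (h1 : (a * q) % n = b1)
    (h2 : (a * q ^ 2) % n = b2) (h3 : (a * q ^ 3) % n = b3)
    (d01 : b0 ≠ b1) (d02 : b0 ≠ b2) (d03 : b0 ≠ b3)
    (d12 : b1 ≠ b2) (d13 : b1 ≠ b3) (d23 : b2 ≠ b3) :
    Set.ncard {b : ℕ | ∃ j : ℕ, b = (a * q ^ j) % n} = 4 := by
  have hper : ∀ j : ℕ, (a * q ^ j) % n = (a * q ^ (j % 4)) % n := by
    intro j
    have hj : j = 4 * (j / 4) + j % 4 := (Nat.div_add_mod j 4).symm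
    have harg : a * q ^ j = (a * q ^ (j % 4)) * (q ^ 4) ^ (j / 4) := by
      conv_lhs => rw [hj]
      rw [pow_add, pow_mul]; ring
    have hpow : (q ^ 4) ^ (j / 4) % n = 1 := by
      rw [Nat.pow_mod, h4, one_pow, Nat.mod_eq_of_lt (by omega)]
    rw [harg, Nat.mul_mod, hpow, mul_one, Nat.mod_mod_of_dvd _ dvd_rfl]
  have hset : {b : ℕ | ∃ j : ℕ, b = (a * q ^ j) % n}
      = ↑({b0, b1, b2, b3} : Finset ℕ) := by
    ext b
    simp only [Set.mem_setOf_eq, Finset.coe_insert, Set.mem_insert_iff,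
      Finset.coe_singleton, Set.mem_singleton_iff]
    constructor
    · rintro ⟨j, rfl⟩
      rw [hper j]
      have hlt : j % 4 = 0 ∨ j % 4 = 1 ∨ j % 4 = 2 ∨ j % 4 = 3 := by omega
      rcases hlt with h | h | h | h <;> rw [h]
      · rw [pow_zero, mul_one, h0]; tauto
      · rw [pow_one, h1]; tauto
      · rw [h2]; tauto
      · rw [h3]; tauto
    · rintro (rfl | rfl | rfl | rfl)
      · exact ⟨0, by rw [pow_zero, mul_one, h0]⟩
      · exact ⟨1, by rw [pow_one, h1]⟩
      · exact ⟨2, by rw [h2]⟩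
      · exact ⟨3, by rw [h3]⟩
  rw [hset, Set.ncard_coe_finset]
  rw [Finset.card_insert_of_notMem (by simp [d01, d02, d03]),
    Finset.card_insert_of_notMem (by simp [d12, d13]),
    Finset.card_insert_of_notMem (by simp [d23]),
    Finset.card_singleton]

/-- For `q > 2` a power of 2 and `n = q² + 1`, each of the four largest
`q`-cyclotomic coset leaders modulo `n` has a cyclotomic coset of size 4. -/
theorem coset_size_four_even_q (t : ℕ) (ht : 2 ≤ t)
    (q : ℕ) (hq : q = 2 ^ t) (n : ℕ) (hn : n = q ^ 2 + 1) (a : ℕ)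
    (ha : a = (q ^ 2 - q) / 2 ∨ a = (q ^ 2 - 3 * q + 2) / 2 ∨
          a = (q ^ 2 - 3 * q) / 2 ∨ a = (q ^ 2 - 3 * q - 2) / 2) :
    Set.ncard {b : ℕ | ∃ j : ℕ, b = (a * q ^ j) % n} = 4 := by
  obtain ⟨c, hc, hq2c⟩ : ∃ c, 2 ≤ c ∧ q = 2 * c := by
    refine ⟨2 ^ (t - 1), ?_, ?_⟩
    · calc 2 = 2 ^ 1 := rfl
        _ ≤ 2 ^ (t - 1) := Nat.pow_le_pow_right (by norm_num) (by omega)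
    · rw [hq, ← pow_succ']
      congr 1
      omega
  set X := c * c with hX
  have hXz : (X : ℤ) = (c : ℤ) * c := by exact_mod_cast congrArg (Nat.cast (R := ℤ)) hX
  have hXc : 2 * c ≤ X := by nlinarith
  have hq2X : q ^ 2 = 4 * X := by rw [hq2c, hX]; ring
  have hn' : n = 4 * X + 1 := by rw [hn, hq2X]
  have hn2 : 2 ≤ n := by omega
  have key4 : q ^ 4 = n * (q ^ 2 - 1) + 1 := by
    rw [hn]
    zify [show 1 ≤ q ^ 2 from Nat.one_le_pow _ _ (by omega)]
    ring
  have h4mod : q ^ 4 % n = 1 := by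
    rw [key4, Nat.mul_add_mod, Nat.mod_eq_of_lt (by omega)]
  rcases ha with ha | ha | ha | ha
  · -- a = (q² - q)/2 = 2X - c ; coset {2X-c, 2X-c+1, 2X+c+1, 2X+c}
    have haval : a = 2 * X - c := by rw [ha, hq2X, hq2c]; omega
    have h0 : a % n = 2 * X - c := by
      rw [haval]; exact Nat.mod_eq_of_lt (by omega)
    have hI1 : (2 * X - c) * q = (2 * X - c + 1) + (c - 1) * n := by
      rw [hq2c, hn']
      zify [show c ≤ 2 * X from by omega, show 1 ≤ c from by omega]
      linear_combination 2 * hXz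
    have hI2 : (2 * X - c + 1) * q = (2 * X + c + 1) + (c - 1) * n := by
      rw [hq2c, hn']
      zify [show c ≤ 2 * X from by omega, show 1 ≤ c from by omega]
      linear_combination 2 * hXz
    have hI3 : (2 * X + c + 1) * q = (2 * X + c) + c * n := by
      rw [hq2c, hn']
      zify
      linear_combination (-2 : ℤ) * hXz
    have h1 := step_mod n q a _ _ _ h0 hI1 (by omega)
    have h2' := step_mod n q (a * q) _ _ _ h1 hI2 (by omega)
    have h3' := step_mod n q (a * q * q) _ _ _ h2' hI3 (by omega)
    have h2 : a * q ^ 2 % n = 2 * X + c + 1 := by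
      rw [show a * q ^ 2 = a * q * q from by ring]; exact h2'
    have h3 : a * q ^ 3 % n = 2 * X + c := by
      rw [show a * q ^ 3 = a * q * q * q from by ring]; exact h3'
    exact coset_four n q a _ _ _ _ hn2 h4mod h0 h1 h2 h3
      (by omega) (by omega) (by omega) (by omega) (by omega) (by omega)
  · -- a = 2X - 3c + 1 ; coset {2X-3c+1, 2X+c+2, 2X+3c, 2X-c-1}
    have haval : a = 2 * X - 3 * c + 1 := by rw [ha, hq2X, hq2c]; omega
    have h0 : a % n = 2 * X - 3 * c + 1 := by
      rw [haval]; exact Nat.mod_eq_of_lt (by omega)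
    have hI1 : (2 * X - 3 * c + 1) * q = (2 * X + c + 2) + (c - 2) * n := by
      rw [hq2c, hn']
      zify [show 3 * c ≤ 2 * X from by omega, show 2 ≤ c from hc]
      linear_combination 6 * hXz
    have hI2 : (2 * X + c + 2) * q = (2 * X + 3 * c) + c * n := by
      rw [hq2c, hn']
      zify
      linear_combination (-2 : ℤ) * hXz
    have hI3 : (2 * X + 3 * c) * q = (2 * X - c - 1) + (c + 1) * n := by
      rw [hq2c, hn']
      zify [show c ≤ 2 * X from by omega, show 1 ≤ 2 * X - c from by omega]
      linear_combination (-6 : ℤ) * hXz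
    have h1 := step_mod n q a _ _ _ h0 hI1 (by omega)
    have h2' := step_mod n q (a * q) _ _ _ h1 hI2 (by omega)
    have h3' := step_mod n q (a * q * q) _ _ _ h2' hI3 (by omega)
    have h2 : a * q ^ 2 % n = 2 * X + 3 * c := by
      rw [show a * q ^ 2 = a * q * q from by ring]; exact h2'
    have h3 : a * q ^ 3 % n = 2 * X - c - 1 := by
      rw [show a * q ^ 3 = a * q * q * q from by ring]; exact h3'
    exact coset_four n q a _ _ _ _ hn2 h4mod h0 h1 h2 h3
      (by omega) (by omega) (by omega) (by omega) (by omega) (by omega)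
  · -- a = 2X - 3c ; coset {2X-3c, 2X-c+2, 2X+3c+1, 2X+c-1}
    have haval : a = 2 * X - 3 * c := by rw [ha, hq2X, hq2c]; omega
    have h0 : a % n = 2 * X - 3 * c := by
      rw [haval]; exact Nat.mod_eq_of_lt (by omega)
    have hI1 : (2 * X - 3 * c) * q = (2 * X - c + 2) + (c - 2) * n := by
      rw [hq2c, hn']
      zify [show 3 * c ≤ 2 * X from by omega, show c ≤ 2 * X from by omega,
        show 2 ≤ c from hc]
      linear_combination 6 * hXz
    have hI2 : (2 * X - c + 2) * q = (2 * X + 3 * c + 1) + (c - 1) * n := by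
      rw [hq2c, hn']
      zify [show c ≤ 2 * X from by omega, show 1 ≤ c from by omega]
      linear_combination 2 * hXz
    have hI3 : (2 * X + 3 * c + 1) * q = (2 * X + c - 1) + (c + 1) * n := by
      rw [hq2c, hn']
      zify [show 1 ≤ 2 * X + c from by omega]
      linear_combination (-6 : ℤ) * hXz
    have h1 := step_mod n q a _ _ _ h0 hI1 (by omega)
    have h2' := step_mod n q (a * q) _ _ _ h1 hI2 (by omega)
    have h3' := step_mod n q (a * q * q) _ _ _ h2' hI3 (by omega)
    have h2 : a * q ^ 2 % n = 2 * X + 3 * c + 1 := by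
      rw [show a * q ^ 2 = a * q * q from by ring]; exact h2'
    have h3 : a * q ^ 3 % n = 2 * X + c - 1 := by
      rw [show a * q ^ 3 = a * q * q * q from by ring]; exact h3'
    exact coset_four n q a _ _ _ _ hn2 h4mod h0 h1 h2 h3
      (by omega) (by omega) (by omega) (by omega) (by omega) (by omega)
  · -- a = 2X - 3c - 1 ; coset {2X-3c-1, 2X-3c+2, 2X+3c+2, 2X+3c-1}
    have haval : a = 2 * X - 3 * c - 1 := by rw [ha, hq2X, hq2c]; omega
    have h0 : a % n = 2 * X - 3 * c - 1 := by
      rw [haval]; exact Nat.mod_eq_of_lt (by omega)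
    have hI1 : (2 * X - 3 * c - 1) * q = (2 * X - 3 * c + 2) + (c - 2) * n := by
      rw [hq2c, hn']
      zify [show 3 * c ≤ 2 * X from by omega, show 1 ≤ 2 * X - 3 * c from by omega,
        show 2 ≤ c from hc]
      linear_combination 6 * hXz
    have hI2 : (2 * X - 3 * c + 2) * q = (2 * X + 3 * c + 2) + (c - 2) * n := by
      rw [hq2c, hn']
      zify [show 3 * c ≤ 2 * X from by omega, show 2 ≤ c from hc]
      linear_combination 6 * hXz
    have hI3 : (2 * X + 3 * c + 2) * q = (2 * X + 3 * c - 1) + (c + 1) * n := by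
      rw [hq2c, hn']
      zify [show 1 ≤ 2 * X + 3 * c from by omega]
      linear_combination (-6 : ℤ) * hXz
    have h1 := step_mod n q a _ _ _ h0 hI1 (by omega)
    have h2' := step_mod n q (a * q) _ _ _ h1 hI2 (by omega)
    have h3' := step_mod n q (a * q * q) _ _ _ h2' hI3 (by omega)
    have h2 : a * q ^ 2 % n = 2 * X + 3 * c + 2 := by
      rw [show a * q ^ 2 = a * q * q from by ring]; exact h2'
    have h3 : a * q ^ 3 % n = 2 * X + 3 * c - 1 := by
      rw [show a * q ^ 3 = a * q * q * q from by ring]; exact h3'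
    exact coset_four n q a _ _ _ _ hn2 h4mod h0 h1 h2 h3
      (by omega) (by omega) (by omega) (by omega) (by omega) (by omega)
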